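/- (STE passive-aggressive step size.) Let K be a real n×n matrix, t = (a,b,c) a triplet of distinct indices with canonical gradient matrix G, and P ∈ (1/2, 1) with κ = log P − log(1 − P) > 0. Suppose p_t^K < P. Set δ* = (d²_K(a,b) − d²_K(a,c) + κ)/10. Then δ* > 0, p_t^{K−δ*G} = P, and every δ ≥ 0 with p_t^{K−δG} ≥ P satisfies δ ≥ δ*; i.e., δ* is the unique minimizer of δ² subject to δ ≥ 0 and p_t^{K−δG} ≥ P. -/

import Mathlib

/-- The canonical gradient matrix `G(a,b,c)` of a triplet of indices. -/
def canonG {n : ℕ} (a b c : Fin n) : Matrix (Fin n) (Fin n) ℝ :=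
  fun i j =>
    if (i = a ∧ j = b) ∨ (i = b ∧ j = a) then -2
    else if (i = a ∧ j = c) ∨ (i = c ∧ j = a) then 2
    else if i = b ∧ j = b then 1
    else if i = c ∧ j = c then -1
    else 0

/-- The kernel squared distance `d²_K(a,b) = K_aa + K_bb - 2 K_ab`. -/
def d2 {n : ℕ} (K : Matrix (Fin n) (Fin n) ℝ) (a b : Fin n) : ℝ :=
  K a a + K b b - 2 * K a b

/-- The STE satisfaction probability of the triplet `(a,b,c)` under kernel `K`. -/
noncomputable def pSTE {n : ℕ} (K : Matrix (Fin n) (Fin n) ℝ) (a b c : Fin n) : ℝ :=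
  Real.exp (-(d2 K a b)) / (Real.exp (-(d2 K a b)) + Real.exp (-(d2 K a c)))

lemma pSTE_eq {n : ℕ} (K : Matrix (Fin n) (Fin n) ℝ) (a b c : Fin n) :
    pSTE K a b c = 1 / (1 + Real.exp (d2 K a b - d2 K a c)) := by
  unfold pSTE
  set u := d2 K a b
  set v := d2 K a c
  rw [div_eq_div_iff (by positivity) (by positivity)]
  have h : -u + (u - v) = -v := by ring
  rw [mul_add, mul_one, ← Real.exp_add, h, one_mul]

/-- STE passive-aggressive step size: if `p_t^K < P` with `P ∈ (1/2, 1)` and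
`κ = log P - log(1-P)`, then `δ* = (d²_K(a,b) - d²_K(a,c) + κ)/10` is positive,
achieves `p_t^{K - δ*G} = P`, and is the smallest nonnegative step size `δ` with
`p_t^{K - δG} ≥ P` (hence the unique minimizer of `δ²` over the feasible set). -/
theorem ste_passive_aggressive_step {n : ℕ} (hn : 3 ≤ n) (a b c : Fin n)
    (hab : a ≠ b) (hac : a ≠ c) (hbc : b ≠ c)
    (K : Matrix (Fin n) (Fin n) ℝ)
    (P : ℝ) (hP0 : 1 / 2 < P) (hP1 : P < 1)
    (κ : ℝ) (hκ : κ = Real.log P - Real.log (1 - P))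
    (hviol : pSTE K a b c < P)
    (δstar : ℝ) (hδstar : δstar = (d2 K a b - d2 K a c + κ) / 10) :
    0 < δstar ∧
    pSTE (K - δstar • canonG a b c) a b c = P ∧
    ∀ δ : ℝ, 0 ≤ δ → P ≤ pSTE (K - δ • canonG a b c) a b c → δstar ≤ δ := by
  have hP0' : 0 < P := lt_trans (by norm_num) hP0
  have h1P : 0 < 1 - P := by linarith
  -- entries of canonG
  have gaa : canonG a b c a a = 0 := by simp [canonG, hab, hac]
  have gbb : canonG a b c b b = 1 := by simp [canonG, Ne.symm hab, hbc]
  have gcc : canonG a b c c c = -1 := by simp [canonG, Ne.symm hac, Ne.symm hbc]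
  have gab : canonG a b c a b = -2 := by simp [canonG]
  have gac : canonG a b c a c = 2 := by simp [canonG, hab, Ne.symm hbc]
  have hd2b : ∀ δ : ℝ, d2 (K - δ • canonG a b c) a b = d2 K a b - 5 * δ := by
    intro δ
    simp [d2, Matrix.sub_apply, Matrix.smul_apply, gaa, gbb, gab]
    ring
  have hd2c : ∀ δ : ℝ, d2 (K - δ • canonG a b c) a c = d2 K a c + 5 * δ := by
    intro δ
    simp [d2, Matrix.sub_apply, Matrix.smul_apply, gaa, gcc, gac]
    ring
  set x := d2 K a b - d2 K a c with hx
  have hp : ∀ δ : ℝ, pSTE (K - δ • canonG a b c) a b c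
      = 1 / (1 + Real.exp (x - 10 * δ)) := by
    intro δ
    rw [pSTE_eq, hd2b, hd2c]
    rw [hx]
    ring_nf
  have hexpκ : Real.exp (-κ) = (1 - P) / P := by
    rw [hκ, neg_sub, Real.exp_sub, Real.exp_log h1P, Real.exp_log hP0']
  -- from violation: -κ < x
  have hxκ : -κ < x := by
    rw [pSTE_eq] at hviol
    have hpos : 0 < 1 + Real.exp x := by positivity
    have h1 : 1 < P * (1 + Real.exp x) := by
      rw [div_lt_iff₀ hpos] at hviol; linarith
    have h2 : (1 - P) / P < Real.exp x := by
      rw [div_lt_iff₀ hP0']; nlinarith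
    have := Real.exp_lt_exp.mp (hexpκ ▸ h2)
    linarith
  have hδpos : 0 < δstar := by rw [hδstar]; linarith
  refine ⟨hδpos, ?_, ?_⟩
  · rw [hp, hδstar]
    have harg : x - 10 * ((d2 K a b - d2 K a c + κ) / 10) = -κ := by
      rw [hx]; ring
    rw [harg, hexpκ]
    rw [eq_comm, eq_div_iff (by positivity)]
    field_simp
    ring
  · intro δ _ hge
    rw [hp] at hge
    have hpos : 0 < 1 + Real.exp (x - 10 * δ) := by positivity
    have h1 : P * (1 + Real.exp (x - 10 * δ)) ≤ 1 := by
      rw [le_div_iff₀ hpos] at hge; linarith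
    have h2 : Real.exp (x - 10 * δ) ≤ (1 - P) / P := by
      rw [le_div_iff₀ hP0']; nlinarith
    have h3 : x - 10 * δ ≤ -κ := Real.exp_le_exp.mp (hexpκ ▸ h2)
    rw [hδstar]; linarith
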